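/- Let P_1, …, P_N be discrete probability measures on ℝ^d. Then for any weights λ_1, …, λ_N > 0 with ∑_{i=1}^N λ_i = 1, there exists a barycenter P̄ of P_1, …, P_N whose support satisfies |P̄| ≤ ∑_{i=1}^N |P_i| − N + 1. -/

import Mathlib

open MeasureTheory ENNReal

/-- Points of `ℝ^d`. -/
abbrev Pt (d : ℕ) := EuclideanSpace ℝ (Fin d)

/-- The set of atoms (support points) of a measure. -/
def msupp {α : Type*} [MeasurableSpace α] (P : Measure α) : Set α := {x | P {x} ≠ 0}

/-- A measure is finitely supported (discrete) if its set of atoms is finite and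
carries all the mass. -/
def FinitelySupported {α : Type*} [MeasurableSpace α] (P : Measure α) : Prop :=
  (msupp P).Finite ∧ P (msupp P)ᶜ = 0

/-- Finite second moment. -/
def FiniteSecondMoment {d : ℕ} (P : Measure (Pt d)) : Prop :=
  ∫⁻ x, ENNReal.ofReal (‖x‖ ^ 2) ∂P < ⊤

/-- The squared 2-Wasserstein distance: the infimum of `∫ ‖x - y‖² dπ` over all
couplings `π` of `P` and `Q`. -/
noncomputable def W2sq {d : ℕ} (P Q : Measure (Pt d)) : ℝ≥0∞ :=
  ⨅ π ∈ {π : Measure (Pt d × Pt d) | π.map Prod.fst = P ∧ π.map Prod.snd = Q},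
    ∫⁻ p, ENNReal.ofReal (‖p.1 - p.2‖ ^ 2) ∂π

/-- The barycenter objective `φ(P) = ∑ i, λ i * W₂(P, P i)²`. -/
noncomputable def phi {d N : ℕ} (l : Fin N → ℝ) (Pm : Fin N → Measure (Pt d))
    (P : Measure (Pt d)) : ℝ≥0∞ :=
  ∑ i, ENNReal.ofReal (l i) * W2sq P (Pm i)

/-- A (Wasserstein) barycenter: a probability measure with finite second moment
minimizing `φ` among all such measures. -/
def IsBarycenter {d N : ℕ} (l : Fin N → ℝ) (Pm : Fin N → Measure (Pt d))
    (P : Measure (Pt d)) : Prop :=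
  IsProbabilityMeasure P ∧ FiniteSecondMoment P ∧
    ∀ Q : Measure (Pt d), IsProbabilityMeasure Q → FiniteSecondMoment Q →
      phi l Pm P ≤ phi l Pm Q

/-- The set `S` of weighted centroids of combinations of support points,
one from each measure. -/
def centroidSet {d N : ℕ} (l : Fin N → ℝ) (Pm : Fin N → Measure (Pt d)) : Set (Pt d) :=
  {y | ∃ x : Fin N → Pt d, (∀ i, x i ∈ msupp (Pm i)) ∧ y = ∑ i, l i • x i}

/-- The union `S_org` of the supports of the measures. -/
def origSupport {d N : ℕ} (Pm : Fin N → Measure (Pt d)) : Set (Pt d) :=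
  ⋃ i, msupp (Pm i)


noncomputable instance (d : ℕ) : DecidableEq (Pt d) := Classical.decEq _

open Finset
section LP
variable {N : ℕ} {α : Type*} [DecidableEq α]

noncomputable def marg (S : Fin N → Finset α) (w : (Fin N → α) → ℝ) (i : Fin N) (s : α) : ℝ :=
  ∑ t ∈ Fintype.piFinset S, if t i = s then w t else 0

def FeasLP (S : Fin N → Finset α) (b : Fin N → α → ℝ) (w : (Fin N → α) → ℝ) : Prop :=
  (∀ t, 0 ≤ w t) ∧ (∀ t, t ∉ Fintype.piFinset S → w t = 0) ∧
    ∀ i, ∀ s ∈ S i, marg S w i s = b i s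

noncomputable def objLP (S : Fin N → Finset α) (c : (Fin N → α) → ℝ)
    (w : (Fin N → α) → ℝ) : ℝ :=
  ∑ t ∈ Fintype.piFinset S, w t * c t

lemma marg_add_smul (S : Fin N → Finset α) (w v : (Fin N → α) → ℝ) (a : ℝ) (i : Fin N)
    (s : α) : marg S (fun t => w t + a * v t) i s = marg S w i s + a * marg S v i s := by
  unfold marg
  rw [mul_sum, ← sum_add_distrib]
  exact sum_congr rfl fun t _ => by split <;> simp

lemma marg_neg (S : Fin N → Finset α) (v : (Fin N → α) → ℝ) (i : Fin N) (s : α) :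
    marg S (fun t => -v t) i s = -marg S v i s := by
  unfold marg
  rw [← sum_neg_distrib]
  exact sum_congr rfl fun t _ => by split <;> simp

lemma obj_add_smul (S : Fin N → Finset α) (c w v : (Fin N → α) → ℝ) (a : ℝ) :
    objLP S c (fun t => w t + a * v t) = objLP S c w + a * objLP S c v := by
  unfold objLP
  rw [mul_sum, ← sum_add_distrib]
  exact sum_congr rfl fun t _ => by ring

lemma obj_neg (S : Fin N → Finset α) (c v : (Fin N → α) → ℝ) :
    objLP S c (fun t => -v t) = -objLP S c v := by
  unfold objLP
  rw [← sum_neg_distrib]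
  exact sum_congr rfl fun t _ => by ring

lemma marg_sum_eq_total (S : Fin N → Finset α) (w : (Fin N → α) → ℝ) (i : Fin N) :
    ∑ s ∈ S i, marg S w i s = ∑ t ∈ Fintype.piFinset S, w t := by
  unfold marg
  rw [← Finset.sum_fiberwise_of_maps_to (g := fun t => t i) (t := S i)
    (fun t ht => (Fintype.mem_piFinset.mp ht) i) w]
  exact sum_congr rfl fun s _ => by rw [sum_filter]

/-- Sparsification: a minimizer whose support has at most `∑ |S i| - N + 1` points. -/
lemma lp_sparse (S : Fin N → Finset α) (b : Fin N → α → ℝ) (c : (Fin N → α) → ℝ)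
    (hN : 0 < N) (hSne : ∀ i, (S i).Nonempty)
    (hmin : ∃ w, FeasLP S b w ∧ ∀ w', FeasLP S b w' → objLP S c w ≤ objLP S c w') :
    ∃ w, FeasLP S b w ∧ (∀ w', FeasLP S b w' → objLP S c w ≤ objLP S c w') ∧
      ((Fintype.piFinset S).filter (fun t => w t ≠ 0)).card + N ≤ (∑ i, (S i).card) + 1 := by
  classical
  set T := Fintype.piFinset S with hT
  set A : Set ℕ := {k | ∃ w, (FeasLP S b w ∧ ∀ w', FeasLP S b w' → objLP S c w ≤ objLP S c w')
    ∧ (T.filter (fun t => w t ≠ 0)).card = k} with hA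
  have hAne : A.Nonempty := by
    obtain ⟨w, hw⟩ := hmin
    exact ⟨_, w, hw, rfl⟩
  obtain ⟨w, ⟨hwF, hwmin⟩, hwcard⟩ := Nat.sInf_mem hAne
  refine ⟨w, hwF, hwmin, ?_⟩
  by_contra hcon
  push_neg at hcon
  set D := T.filter (fun t => w t ≠ 0) with hD
  have hDT : D ⊆ T := filter_subset _ _
  -- the reduced constraint index set
  set r : (i : Fin N) → α := fun i => (hSne i).choose with hr
  have hrS : ∀ i, r i ∈ S i := fun i => (hSne i).choose_spec
  set i0 : Fin N := ⟨0, hN⟩ with hi0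
  set Cset : Finset (Fin N × α) :=
    ((Finset.univ : Finset (Fin N)).biUnion fun i => ((S i).erase (r i)).image (Prod.mk i))
      ∪ {(i0, r i0)} with hCset
  have hCmem : ∀ i, ∀ s ∈ S i, s ≠ r i → (i, s) ∈ Cset := by
    intro i s hs hne
    apply mem_union_left
    exact mem_biUnion.mpr ⟨i, mem_univ i, mem_image_of_mem _ (mem_erase.mpr ⟨hne, hs⟩)⟩
  have hC0 : ∀ s ∈ S i0, (i0, s) ∈ Cset := by
    intro s hs
    by_cases h : s = r i0
    · subst h; exact mem_union_right _ (mem_singleton_self _)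
    · exact hCmem i0 s hs h
  have hCcard : Cset.card + N ≤ (∑ i, (S i).card) + 1 := by
    have h1 : Cset.card ≤ (∑ i, ((S i).erase (r i)).card) + 1 := by
      refine le_trans (card_union_le _ _) ?_
      have hb : (univ.biUnion fun i => ((S i).erase (r i)).image (Prod.mk i)).card
          ≤ ∑ i, ((S i).erase (r i)).card :=
        le_trans card_biUnion_le (sum_le_sum fun i _ => card_image_le)
      have hs : ({(i0, r i0)} : Finset (Fin N × α)).card = 1 := rfl
      omega
    have h2 : (∑ i, ((S i).erase (r i)).card) + N = ∑ i, (S i).card := by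
      have key : ∀ i : Fin N, ((S i).erase (r i)).card + 1 = (S i).card := by
        intro i
        rw [card_erase_of_mem (hrS i)]
        exact Nat.sub_add_cancel (card_pos.mpr (hSne i))
      calc (∑ i, ((S i).erase (r i)).card) + N
          = ∑ i : Fin N, (((S i).erase (r i)).card + 1) := by
            rw [sum_add_distrib, Finset.sum_const, card_univ, Fintype.card_fin,
              smul_eq_mul, mul_one]
        _ = ∑ i, (S i).card := sum_congr rfl fun i _ => key i
    omega
  have hCD : Cset.card < D.card := by omega
  -- non-injective linear map
  set φ : ((↥D) → ℝ) →ₗ[ℝ] ((↥Cset) → ℝ) :=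
    { toFun := fun z q => ∑ t ∈ D.attach, if (t : Fin N → α) q.1.1 = q.1.2 then z t else 0
      map_add' := by
        intro z z'
        funext q
        simp only [Pi.add_apply]
        rw [← sum_add_distrib]
        exact sum_congr rfl fun t _ => by split <;> simp
      map_smul' := by
        intro a z
        funext q
        simp only [RingHom.id_apply, Pi.smul_apply, smul_eq_mul, mul_sum]
        exact sum_congr rfl fun t _ => by split <;> simp } with hφ
  have hφni : ¬ Function.Injective φ := by
    intro hinj
    have := LinearMap.finrank_le_finrank_of_injective hinj
    rw [Module.finrank_pi, Module.finrank_pi, Fintype.card_coe, Fintype.card_coe] at this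
    omega
  obtain ⟨z1, z2, hz12, hzne⟩ := Function.not_injective_iff.mp hφni
  set z := z1 - z2 with hz
  have hzz : z ≠ 0 := sub_ne_zero.mpr hzne
  have hφz : φ z = 0 := by rw [map_sub, hz12, sub_self]
  set ζ : (Fin N → α) → ℝ := fun t => if h : t ∈ D then z ⟨t, h⟩ else 0 with hζ
  have hζD : ∀ t, ζ t ≠ 0 → t ∈ D := by
    intro t ht
    by_contra h
    exact ht (by simp [hζ, h])
  have hmargζ : ∀ i, ∀ s ∈ S i, marg S ζ i s = 0 := by
    have hmargC : ∀ q ∈ Cset, marg S ζ q.1 q.2 = 0 := by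
      intro q hq
      have h1 : marg S ζ q.1 q.2 = ∑ t ∈ D, if t q.1 = q.2 then ζ t else 0 := by
        unfold marg
        refine (Finset.sum_subset hDT ?_).symm
        intro t _ htD
        simp [hζ, htD]
      have h2 : ∑ t ∈ D, (if t q.1 = q.2 then ζ t else 0)
          = ∑ t ∈ D.attach, if (t : Fin N → α) q.1 = q.2 then z t else 0 := by
        rw [← Finset.sum_attach D (fun t => if t q.1 = q.2 then ζ t else 0)]
        exact sum_congr rfl fun t _ => by simp [hζ, t.2]
      have := congrFun hφz ⟨q, hq⟩
      simpa [hφ, h1, h2] using (h1.trans h2).trans this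
    intro i s hs
    by_cases hne : s ≠ r i
    · exact hmargC (i, s) (hCmem i s hs hne)
    · push_neg at hne
      subst hne
      have htot : ∑ s ∈ S i, marg S ζ i s = ∑ s ∈ S i0, marg S ζ i0 s := by
        rw [marg_sum_eq_total, marg_sum_eq_total]
      have h0 : ∑ s ∈ S i0, marg S ζ i0 s = 0 :=
        sum_eq_zero fun s hs => hmargC (i0, s) (hC0 s hs)
      have herase : ∑ s ∈ (S i).erase (r i), marg S ζ i s = 0 :=
        sum_eq_zero fun s hs =>
          hmargC (i, s) (hCmem i s (mem_of_mem_erase hs) (mem_erase.mp hs).1)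
      have := Finset.sum_erase_add (S i) (marg S ζ i) (hrS i)
      rw [herase, zero_add] at this
      rw [this, htot, h0]
  -- choose the sign so the objective direction is non-positive
  obtain ⟨ξ, hξD, hξm, hξnz, hξobj⟩ :
      ∃ ξ : (Fin N → α) → ℝ, (∀ t, ξ t ≠ 0 → t ∈ D) ∧ (∀ i, ∀ s ∈ S i, marg S ξ i s = 0)
        ∧ (∃ t, ξ t ≠ 0) ∧ objLP S c ξ ≤ 0 := by
    have hex : ∃ t, ζ t ≠ 0 := by
      obtain ⟨t, ht⟩ := Function.ne_iff.mp hzz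
      exact ⟨t, by simpa [hζ, t.2] using ht⟩
    rcases le_or_gt (objLP S c ζ) 0 with h | h
    · exact ⟨ζ, hζD, hmargζ, hex, h⟩
    · refine ⟨fun t => -ζ t, fun t ht => hζD t (by simpa using ht), ?_, ?_, ?_⟩
      · intro i s hs; rw [marg_neg, hmargζ i s hs, neg_zero]
      · obtain ⟨t, ht⟩ := hex; exact ⟨t, by simpa using ht⟩
      · rw [obj_neg]; linarith
  -- there is a strictly negative coordinate
  have htotξ : ∑ t ∈ T, ξ t = 0 := by
    rw [← marg_sum_eq_total S ξ i0]
    exact sum_eq_zero fun s hs => hξm i0 s hs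
  have hDneg : ∃ t ∈ T, ξ t < 0 := by
    by_contra h
    push_neg at h
    obtain ⟨t, ht⟩ := hξnz
    have htT : t ∈ T := hDT (hξD t ht)
    exact ht ((Finset.sum_eq_zero_iff_of_nonneg (fun x hx => h x hx)).mp htotξ t htT)
  set Dneg := T.filter (fun t => ξ t < 0) with hDnegd
  have hDnegne : Dneg.Nonempty := by
    obtain ⟨t, h1, h2⟩ := hDneg
    exact ⟨t, mem_filter.mpr ⟨h1, h2⟩⟩
  obtain ⟨t₀, ht₀, hmin₀⟩ := Finset.exists_min_image Dneg (fun t => w t / (-ξ t)) hDnegne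
  have hξt₀ : ξ t₀ < 0 := (mem_filter.mp ht₀).2
  have ht₀D : t₀ ∈ D := hξD t₀ (ne_of_lt hξt₀)
  have hwt₀ : 0 < w t₀ := lt_of_le_of_ne (hwF.1 t₀) (Ne.symm (mem_filter.mp ht₀D).2)
  set ε := w t₀ / (-ξ t₀) with hε
  have hεpos : 0 < ε := div_pos hwt₀ (neg_pos.mpr hξt₀)
  set w' : (Fin N → α) → ℝ := fun t => w t + ε * ξ t with hw'
  have hw'nn : ∀ t, 0 ≤ w' t := by
    intro t
    rcases le_or_gt 0 (ξ t) with h | h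
    · have := mul_nonneg hεpos.le h
      simp only [hw']
      linarith [hwF.1 t]
    · have htD : t ∈ Dneg := mem_filter.mpr ⟨hDT (hξD t (ne_of_lt h)), h⟩
      have hle : ε ≤ w t / (-ξ t) := hmin₀ t htD
      have : ε * (-ξ t) ≤ w t := by
        rw [← le_div_iff₀ (neg_pos.mpr h)]
        exact hle
      simp only [hw']
      linarith
  have hw'F : FeasLP S b w' := by
    refine ⟨hw'nn, fun t ht => ?_, fun i s hs => ?_⟩
    · have h1 : w t = 0 := hwF.2.1 t ht
      have h2 : ξ t = 0 := by
        by_contra h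
        exact ht (hDT (hξD t h))
      simp [hw', h1, h2]
    · rw [show w' = fun t => w t + ε * ξ t from rfl, marg_add_smul, hξm i s hs,
        hwF.2.2 i s hs, mul_zero, add_zero]
  have hobj' : objLP S c w' ≤ objLP S c w := by
    rw [show w' = fun t => w t + ε * ξ t from rfl, obj_add_smul]
    nlinarith
  have hw'min : ∀ w'', FeasLP S b w'' → objLP S c w' ≤ objLP S c w'' :=
    fun w'' h => hobj'.trans (hwmin w'' h)
  -- support strictly decreases
  have hw't₀ : w' t₀ = 0 := by
    have hξne : ξ t₀ ≠ 0 := ne_of_lt hξt₀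
    have h : ε * ξ t₀ = -w t₀ := by
      rw [hε, div_neg, neg_mul, div_mul_cancel₀ _ hξne]
    simp only [hw']
    rw [h]; ring
  have hsub : T.filter (fun t => w' t ≠ 0) ⊆ D.erase t₀ := by
    intro t ht
    obtain ⟨htT, htne⟩ := mem_filter.mp ht
    refine mem_erase.mpr ⟨?_, ?_⟩
    · intro h; subst h; exact htne hw't₀
    · by_cases h : ξ t = 0
      · refine mem_filter.mpr ⟨htT, ?_⟩
        intro hw0
        apply htne
        simp [hw', h, hw0]
      · exact hξD t h
  have hlt : (T.filter (fun t => w' t ≠ 0)).card < D.card := by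
    calc (T.filter (fun t => w' t ≠ 0)).card ≤ (D.erase t₀).card := card_le_card hsub
      _ < D.card := by
          rw [card_erase_of_mem ht₀D]
          exact Nat.sub_lt (card_pos.mpr ⟨t₀, ht₀D⟩) one_pos
  have hmem : (T.filter (fun t => w' t ≠ 0)).card ∈ A := ⟨w', ⟨hw'F, hw'min⟩, rfl⟩
  have := Nat.sInf_le hmem
  omega
end LP

section LP2
variable {N : ℕ} {α : Type*} [DecidableEq α]
/-- the product weight is feasible -/
lemma feas_prod (S : Fin N → Finset α) (b : Fin N → α → ℝ)
    (hb1 : ∀ i, ∑ s ∈ S i, b i s = 1) (hbnn : ∀ i, ∀ s ∈ S i, 0 ≤ b i s) :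
    FeasLP S b (fun t => if t ∈ Fintype.piFinset S then ∏ i, b i (t i) else 0) := by
  refine ⟨fun t => ?_, fun t ht => by simp [ht], fun i s hs => ?_⟩
  · dsimp only
    split_ifs with h
    · exact Finset.prod_nonneg fun i _ => hbnn i _ ((Fintype.mem_piFinset.mp h) i)
    · exact le_rfl
  · unfold marg
    set f : Fin N → α → ℝ := fun j x => if j = i then (if x = s then b j x else 0) else b j x with hf
    have key : ∀ t ∈ Fintype.piFinset S,
        (if t i = s then (if t ∈ Fintype.piFinset S then ∏ j, b j (t j) else 0) else 0)
        = ∏ j, f j (t j) := by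
      intro t ht
      rw [if_pos ht]
      by_cases h : t i = s
      · rw [if_pos h]
        apply prod_congr rfl
        intro j _
        by_cases hj : j = i
        · subst hj; simp [hf, h]
        · simp [hf, hj]
      · rw [if_neg h]
        symm
        apply prod_eq_zero (mem_univ i)
        simp [hf, h]
    rw [sum_congr rfl key, ← Finset.prod_univ_sum]
    rw [Fintype.prod_eq_mul_prod_compl i]
    have h1 : ∑ x ∈ S i, f i x = b i s := by
      simp only [hf, if_pos rfl]
      rw [Finset.sum_ite_eq' (S i) s (b i), if_pos hs]
    rw [h1]
    have h2 : ∀ j ∈ ({i}ᶜ : Finset (Fin N)), (∑ x ∈ S j, f j x) = 1 := by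
      intro j hj
      have hji : j ≠ i := by simpa using hj
      simp only [hf, if_neg hji]
      exact hb1 j
    rw [prod_congr rfl h2]
    simp

lemma continuous_marg (S : Fin N → Finset α) (i : Fin N) (s : α) :
    Continuous fun w : (Fin N → α) → ℝ => marg S w i s := by
  apply continuous_finset_sum
  intro t _
  by_cases h : t i = s
  · simpa [h] using continuous_apply t
  · simp [h]; exact continuous_const

lemma continuous_objLP (S : Fin N → Finset α) (c : (Fin N → α) → ℝ) :
    Continuous fun w : (Fin N → α) → ℝ => objLP S c w := by
  apply continuous_finset_sum
  intro t _
  exact (continuous_apply t).mul continuous_const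

lemma lp_min_exists (S : Fin N → Finset α) (b : Fin N → α → ℝ) (c : (Fin N → α) → ℝ)
    (hN : 0 < N) (hb1 : ∀ i, ∑ s ∈ S i, b i s = 1) (hbnn : ∀ i, ∀ s ∈ S i, 0 ≤ b i s)
    (hne : ∃ w, FeasLP S b w) :
    ∃ w, FeasLP S b w ∧ ∀ w', FeasLP S b w' → objLP S c w ≤ objLP S c w' := by
  set K := {w : (Fin N → α) → ℝ | FeasLP S b w} with hK
  have hb_le_one : ∀ i, ∀ s ∈ S i, b i s ≤ 1 := by
    intro i s hs
    rw [← hb1 i]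
    exact Finset.single_le_sum (fun x hx => hbnn i x hx) hs
  set C : ((Fin N → α) → Set ℝ) :=
    fun t => if t ∈ Fintype.piFinset S then Set.Icc (0:ℝ) 1 else {0} with hC
  have hbox : K ⊆ Set.pi Set.univ C := by
    rintro w ⟨hw0, hwsupp, hwm⟩ t _
    by_cases ht : t ∈ Fintype.piFinset S
    · simp only [hC, if_pos ht]
      refine ⟨hw0 t, ?_⟩
      set i0 : Fin N := ⟨0, hN⟩
      have hti : t i0 ∈ S i0 := Fintype.mem_piFinset.mp ht i0
      have h1 : w t ≤ marg S w i0 (t i0) := by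
        have := Finset.single_le_sum (f := fun t' => if t' i0 = t i0 then w t' else 0)
          (fun x _ => by split <;> [exact hw0 x; exact le_rfl]) ht
        simpa [marg] using this
      exact h1.trans ((hwm i0 (t i0) hti).le.trans (hb_le_one i0 (t i0) hti))
    · simp only [hC, if_neg ht]
      exact hwsupp t ht
  have hKclosed : IsClosed K := by
    have h1 : K = (⋂ t, {w : (Fin N → α) → ℝ | 0 ≤ w t}) ∩
        ((⋂ t ∈ {t | t ∉ Fintype.piFinset S}, {w : (Fin N → α) → ℝ | w t = 0}) ∩
         (⋂ i, ⋂ s ∈ S i, {w | marg S w i s = b i s})) := by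
      ext w
      simp only [hK, Set.mem_setOf_eq, FeasLP, Set.mem_inter_iff, Set.mem_iInter,
        Set.mem_setOf_eq]
      try tauto
    rw [h1]
    refine IsClosed.inter (isClosed_iInter fun t => ?_)
      (IsClosed.inter (isClosed_biInter fun t _ => ?_) (isClosed_iInter fun i => isClosed_biInter fun s _ => ?_))
    · exact isClosed_le continuous_const (continuous_apply t)
    · exact isClosed_eq (continuous_apply t) continuous_const
    · exact isClosed_eq (continuous_marg S i s) continuous_const
  have hCcomp : IsCompact (Set.pi Set.univ C) := by
    apply isCompact_univ_pi
    intro t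
    by_cases ht : t ∈ Fintype.piFinset S
    · simp only [hC, if_pos ht]; exact isCompact_Icc
    · simp only [hC, if_neg ht]; exact isCompact_singleton
  have hKcomp : IsCompact K := hCcomp.of_isClosed_subset hKclosed hbox
  obtain ⟨w, hwK, hwmin⟩ := hKcomp.exists_isMinOn hne (continuous_objLP S c).continuousOn
  exact ⟨w, hwK, fun w' hw' => hwmin hw'⟩
end LP2

lemma centroid_min {d N : ℕ} (l : Fin N → ℝ) (hsum : ∑ i, l i = 1)
    (t : Fin N → Pt d) (x : Pt d) :
    ∑ i, l i * ‖(∑ j, l j • t j) - t i‖ ^ 2 ≤ ∑ i, l i * ‖x - t i‖ ^ 2 := by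
  set m : Pt d := ∑ j, l j • t j with hm
  have key : ∀ i, ‖x - t i‖ ^ 2
      = ‖x - m‖ ^ 2 + 2 * inner ℝ (x - m) (m - t i) + ‖m - t i‖ ^ 2 := by
    intro i
    have : x - t i = (x - m) + (m - t i) := by abel
    rw [this, norm_add_sq_real]
  have hcross : ∑ i, l i * inner ℝ (x - m) (m - t i) = 0 := by
    have h1 : ∀ i ∈ Finset.univ, l i * (inner ℝ (x - m) (m - t i) : ℝ)
        = inner ℝ (x - m) (l i • (m - t i)) := fun i _ =>
      (real_inner_smul_right _ _ _).symm
    rw [Finset.sum_congr rfl h1, ← inner_sum]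
    have : (∑ i, l i • (m - t i)) = (0 : Pt d) := by
      simp only [smul_sub]
      rw [Finset.sum_sub_distrib, ← Finset.sum_smul, hsum, one_smul, hm]
      abel
    rw [this, inner_zero_right]
  have heq : ∑ i, l i * ‖x - t i‖ ^ 2
      = ‖x - m‖ ^ 2 + ∑ i, l i * ‖m - t i‖ ^ 2 := by
    calc ∑ i, l i * ‖x - t i‖ ^ 2
        = ∑ i, (l i * ‖x - m‖ ^ 2 + 2 * (l i * inner ℝ (x - m) (m - t i))
            + l i * ‖m - t i‖ ^ 2) := by
          apply Finset.sum_congr rfl; intro i _; rw [key i]; ring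
      _ = (∑ i, l i) * ‖x - m‖ ^ 2 + 2 * ∑ i, l i * inner ℝ (x - m) (m - t i)
            + ∑ i, l i * ‖m - t i‖ ^ 2 := by
          rw [Finset.sum_add_distrib, Finset.sum_add_distrib, ← Finset.mul_sum,
            ← Finset.sum_mul, mul_comm]
      _ = ‖x - m‖ ^ 2 + ∑ i, l i * ‖m - t i‖ ^ 2 := by
          rw [hsum, hcross]; ring
  nlinarith [sq_nonneg ‖x - m‖]

section Toolkit
variable {α : Type*} [MeasurableSpace α] [MeasurableSingletonClass α]

lemma meas_finset_sum (P : Measure α) (F : Finset α) : P ↑F = ∑ s ∈ F, P {s} := by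
  have hF : (↑F : Set α) = ⋃ b ∈ F, {b} := by ext x; simp
  rw [hF, measure_biUnion_finset ?_ (fun b _ => measurableSet_singleton b)]
  intro x _ y _ hxy
  exact Set.disjoint_singleton.mpr hxy

lemma msupp_subset_of_null_compl (P : Measure α) (F : Finset α) (h : P (↑F)ᶜ = 0) :
    msupp P ⊆ ↑F := by
  intro x hx
  by_contra hxF
  exact hx (measure_mono_null (Set.singleton_subset_iff.mpr hxF) h)

lemma finitelySupported_of_null_compl (P : Measure α) (F : Finset α) (h : P (↑F)ᶜ = 0) :
    FinitelySupported P := by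
  classical
  refine ⟨Set.Finite.subset F.finite_toSet (msupp_subset_of_null_compl P F h), ?_⟩
  have hdecomp : (msupp P)ᶜ ⊆ (↑F)ᶜ ∪ ↑(F.filter (fun x => x ∉ msupp P)) := by
    intro x hx
    by_cases hxF : x ∈ (F : Set α)
    · exact Or.inr (by simpa [Finset.mem_filter] using ⟨hxF, hx⟩)
    · exact Or.inl hxF
  refine measure_mono_null hdecomp (le_antisymm ?_ zero_le)
  refine le_trans (measure_union_le _ _) ?_
  rw [h, meas_finset_sum]
  have hz : ∀ s ∈ F.filter (fun x => x ∉ msupp P), P {s} = 0 := by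
    intro s hs
    have := (Finset.mem_filter.mp hs).2
    simpa [msupp] using this
  rw [Finset.sum_congr rfl hz]
  simp

lemma repr_of_null_compl (P : Measure α) (F : Finset α) (h : P (↑F)ᶜ = 0) :
    P = ∑ s ∈ F, P {s} • Measure.dirac s := by
  classical
  ext A hA
  rw [Measure.finset_sum_apply]
  have h2 : P (A \ ↑F) = 0 := measure_mono_null (fun x hx => hx.2) h
  have h1 : P A = P (A ∩ ↑F) := by
    rw [← measure_inter_add_diff A F.measurableSet, h2, add_zero]
  have h3 : (A ∩ ↑F) = ↑(F.filter (fun s => s ∈ A)) := by ext x; simp [and_comm]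
  rw [h1, h3, meas_finset_sum, Finset.sum_filter]
  apply sum_congr rfl
  intro s _
  rw [Measure.smul_apply, Measure.dirac_apply' s hA, smul_eq_mul]
  by_cases hsA : s ∈ A <;> simp [hsA]

/-- pushforward of a finite combination of diracs -/
lemma map_sum_smul_dirac {β : Type*} [MeasurableSpace β] [MeasurableSingletonClass β]
    {γ : Type*} (T : Finset γ) (c : γ → ℝ≥0∞) (x : γ → α) (f : α → β) (hf : Measurable f) :
    Measure.map f (∑ t ∈ T, c t • Measure.dirac (x t))
      = ∑ t ∈ T, c t • Measure.dirac (f (x t)) := by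
  ext A hA
  rw [Measure.map_apply hf hA, Measure.finset_sum_apply, Measure.finset_sum_apply]
  apply sum_congr rfl
  intro t _
  rw [Measure.smul_apply, Measure.smul_apply, Measure.dirac_apply' _ (hf hA),
    Measure.dirac_apply' _ hA]
  rfl

lemma lintegral_sum_smul_dirac {γ : Type*} (T : Finset γ) (c : γ → ℝ≥0∞) (x : γ → α)
    (f : α → ℝ≥0∞) :
    ∫⁻ a, f a ∂(∑ t ∈ T, c t • Measure.dirac (x t)) = ∑ t ∈ T, c t * f (x t) := by
  rw [lintegral_finset_sum_measure]
  apply sum_congr rfl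
  intro t _
  rw [lintegral_smul_measure, lintegral_dirac, smul_eq_mul]

lemma sum_smul_dirac_apply {γ : Type*} (T : Finset γ) (c : γ → ℝ≥0∞) (x : γ → α)
    (A : Set α) (hA : MeasurableSet A) :
    (∑ t ∈ T, c t • Measure.dirac (x t)) A = ∑ t ∈ T, c t * A.indicator 1 (x t) := by
  rw [Measure.finset_sum_apply]
  exact sum_congr rfl fun t _ => by rw [Measure.smul_apply, Measure.dirac_apply' _ hA, smul_eq_mul]
end Toolkit

section Upper
variable {d N : ℕ}

noncomputable def mfun (l : Fin N → ℝ) (t : Fin N → Pt d) : Pt d := ∑ j, l j • t j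
noncomputable def costW (l : Fin N → ℝ) (t : Fin N → Pt d) : ℝ :=
  ∑ i, l i * ‖mfun l t - t i‖ ^ 2
noncomputable def PbarM (l : Fin N → ℝ) (S : Fin N → Finset (Pt d))
    (w : (Fin N → Pt d) → ℝ) : Measure (Pt d) :=
  ∑ t ∈ Fintype.piFinset S, ENNReal.ofReal (w t) • Measure.dirac (mfun l t)

lemma costW_nonneg (l : Fin N → ℝ) (hl : ∀ i, 0 < l i) (t : Fin N → Pt d) :
    0 ≤ costW l t :=
  Finset.sum_nonneg fun i _ => mul_nonneg (hl i).le (sq_nonneg _)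

lemma upper_package (l : Fin N → ℝ) (hl : ∀ i, 0 < l i) (hN : 0 < N)
    (S : Fin N → Finset (Pt d)) (Pm : Fin N → Measure (Pt d))
    (hPm : ∀ i, IsProbabilityMeasure (Pm i)) (hnull : ∀ i, Pm i (↑(S i))ᶜ = 0)
    (hb1 : ∀ i, ∑ s ∈ S i, (Pm i {s}).toReal = 1)
    (w : (Fin N → Pt d) → ℝ) (hw : FeasLP S (fun i s => (Pm i {s}).toReal) w) :
    IsProbabilityMeasure (PbarM l S w) ∧ FiniteSecondMoment (PbarM l S w) ∧
      phi l Pm (PbarM l S w) ≤ ENNReal.ofReal (objLP S (costW l) w) ∧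
      PbarM l S w (↑(((Fintype.piFinset S).filter (fun t => w t ≠ 0)).image (mfun l)) : Set (Pt d))ᶜ = 0 := by
  classical
  set T := Fintype.piFinset S with hT
  have htot : ∑ t ∈ T, w t = 1 := by
    rw [← marg_sum_eq_total S w ⟨0, hN⟩,
      Finset.sum_congr rfl (fun s hs => hw.2.2 _ s hs)]
    exact hb1 _
  have hprob : IsProbabilityMeasure (PbarM l S w) := by
    constructor
    rw [PbarM, sum_smul_dirac_apply _ _ _ _ MeasurableSet.univ]
    simp only [Set.indicator_univ, Pi.one_apply, mul_one]
    rw [← ENNReal.ofReal_sum_of_nonneg (fun t _ => hw.1 t), htot, ofReal_one]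
  refine ⟨hprob, ?_, ?_, ?_⟩
  · rw [FiniteSecondMoment, PbarM, lintegral_sum_smul_dirac]
    exact ENNReal.sum_lt_top.mpr fun t _ => ENNReal.mul_lt_top ofReal_lt_top ofReal_lt_top
  · -- the couplings
    have hπ : ∀ i : Fin N, W2sq (PbarM l S w) (Pm i)
        ≤ ∑ t ∈ T, ENNReal.ofReal (w t) * ENNReal.ofReal (‖mfun l t - t i‖ ^ 2) := by
      intro i
      set πi : Measure (Pt d × Pt d) :=
        ∑ t ∈ T, ENNReal.ofReal (w t) • Measure.dirac (mfun l t, t i) with hπi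
      have hfst : πi.map Prod.fst = PbarM l S w := by
        rw [hπi, map_sum_smul_dirac _ _ _ _ measurable_fst]; rfl
      have hsnd : πi.map Prod.snd = Pm i := by
        rw [hπi, map_sum_smul_dirac _ _ _ _ measurable_snd]
        have hregroup : (∑ t ∈ T, ENNReal.ofReal (w t) • Measure.dirac ((mfun l t, t i).2))
            = ∑ s ∈ S i, (∑ t ∈ T.filter (fun t => t i = s), ENNReal.ofReal (w t)) •
                Measure.dirac s := by
          rw [← Finset.sum_fiberwise_of_maps_to (g := fun t => t i) (t := S i)
            (fun t ht => Fintype.mem_piFinset.mp ht i)]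
          refine sum_congr rfl fun s _ => ?_
          rw [Finset.sum_smul]
          exact sum_congr rfl fun t ht => by rw [(Finset.mem_filter.mp ht).2]
        rw [hregroup]
        have hcoef : ∀ s ∈ S i, (∑ t ∈ T.filter (fun t => t i = s), ENNReal.ofReal (w t))
            = Pm i {s} := by
          intro s hs
          haveI := hPm i
          have hm := hw.2.2 i s hs
          rw [marg] at hm
          rw [← ENNReal.ofReal_sum_of_nonneg (fun t _ => hw.1 t), Finset.sum_filter,
            hm, ENNReal.ofReal_toReal (measure_ne_top _ _)]
        rw [Finset.sum_congr rfl fun s hs => by rw [hcoef s hs]]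
        exact (repr_of_null_compl (Pm i) (S i) (hnull i)).symm
      have hle : W2sq (PbarM l S w) (Pm i) ≤ ∫⁻ p, ENNReal.ofReal (‖p.1 - p.2‖ ^ 2) ∂πi :=
        iInf₂_le πi ⟨hfst, hsnd⟩
      refine hle.trans (le_of_eq ?_)
      rw [hπi, lintegral_sum_smul_dirac]
    have hobj : objLP S (costW l) w = ∑ i, l i * ∑ t ∈ T, w t * ‖mfun l t - t i‖ ^ 2 := by
      unfold objLP costW
      calc ∑ t ∈ T, w t * ∑ i, l i * ‖mfun l t - t i‖ ^ 2
          = ∑ t ∈ T, ∑ i : Fin N, l i * (w t * ‖mfun l t - t i‖ ^ 2) := by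
            refine sum_congr rfl fun t _ => ?_
            rw [Finset.mul_sum]
            exact sum_congr rfl fun i _ => by ring
        _ = ∑ i : Fin N, ∑ t ∈ T, l i * (w t * ‖mfun l t - t i‖ ^ 2) := Finset.sum_comm
        _ = ∑ i, l i * ∑ t ∈ T, w t * ‖mfun l t - t i‖ ^ 2 := by
            exact sum_congr rfl fun i _ => (Finset.mul_sum _ _ _).symm
    rw [hobj, ENNReal.ofReal_sum_of_nonneg (fun i _ => mul_nonneg (hl i).le
      (Finset.sum_nonneg fun t _ => mul_nonneg (hw.1 t) (sq_nonneg _)))]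
    rw [phi]
    refine Finset.sum_le_sum fun i _ => ?_
    rw [ENNReal.ofReal_mul (hl i).le, ENNReal.ofReal_sum_of_nonneg
      (fun t _ => mul_nonneg (hw.1 t) (sq_nonneg _))]
    refine mul_le_mul_right ((hπ i).trans (le_of_eq ?_)) _
    exact sum_congr rfl fun t _ => (ENNReal.ofReal_mul (hw.1 t)).symm
  · rw [PbarM, sum_smul_dirac_apply _ _ _ _ (((T.filter (fun t => w t ≠ 0)).image
      (mfun l)).measurableSet.compl)]
    refine Finset.sum_eq_zero fun t ht => ?_
    by_cases hwt : w t = 0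
    · simp [hwt]
    · have hmem : mfun l t ∈ ((T.filter (fun t => w t ≠ 0)).image (mfun l)) :=
        Finset.mem_image_of_mem _ (Finset.mem_filter.mpr ⟨ht, hwt⟩)
      rw [Set.indicator_of_notMem (by simp only [Set.mem_compl_iff, not_not, Finset.mem_coe]; exact hmem)]
      simp
end Upper

section Lower
open ProbabilityTheory
variable {d N : ℕ}

lemma cost_measurable {d : ℕ} :
    Measurable fun p : Pt d × Pt d => ENNReal.ofReal (‖p.1 - p.2‖ ^ 2) :=
  (ENNReal.continuous_ofReal.comp
    (((continuous_fst.sub continuous_snd).norm.pow 2))).measurable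

lemma lower_package (l : Fin N → ℝ) (hl : ∀ i, 0 < l i) (hsum : ∑ i, l i = 1)
    (S : Fin N → Finset (Pt d)) (Pm : Fin N → Measure (Pt d))
    (hPm : ∀ i, IsProbabilityMeasure (Pm i)) (hnull : ∀ i, Pm i (↑(S i))ᶜ = 0)
    (Q : Measure (Pt d)) (hQ : IsProbabilityMeasure Q)
    (π : Fin N → Measure (Pt d × Pt d))
    (hπf : ∀ i, (π i).map Prod.fst = Q) (hπs : ∀ i, (π i).map Prod.snd = Pm i) :
    ∃ w, FeasLP S (fun i s => (Pm i {s}).toReal) w ∧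
      ENNReal.ofReal (objLP S (costW l) w) ≤
        ∑ i, ENNReal.ofReal (l i) * ∫⁻ p, ENNReal.ofReal (‖p.1 - p.2‖ ^ 2) ∂(π i) := by
  classical
  haveI := hQ
  haveI hπP : ∀ i, IsProbabilityMeasure (π i) := by
    intro i
    constructor
    have h1 : ((π i).map Prod.fst) Set.univ = π i Set.univ := by
      rw [Measure.map_apply measurable_fst MeasurableSet.univ, Set.preimage_univ]
    rw [hπf i] at h1
    rw [← h1, measure_univ]
  set T := Fintype.piFinset S with hT
  set κ : Fin N → Kernel (Pt d) (Pt d) := fun i => (π i).condKernel with hκ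
  have hfst : ∀ i, (π i).fst = Q := fun i => hπf i
  have hdis : ∀ i, Q ⊗ₘ κ i = π i := by
    intro i
    rw [hκ, ← hfst i]
    exact (π i).disintegrate _
  have hkint : ∀ i, ∀ B : Set (Pt d), MeasurableSet B →
      ∫⁻ x, κ i x B ∂Q = Pm i B := by
    intro i B hB
    have h1 : (Q ⊗ₘ κ i) (Set.univ ×ˢ B) = ∫⁻ x, κ i x B ∂Q := by
      rw [Measure.compProd_apply (MeasurableSet.univ.prod hB)]
      apply lintegral_congr
      intro x
      congr 1
      ext y
      simp
    have h2 : (Set.univ : Set (Pt d)) ×ˢ B = Prod.snd ⁻¹' B := by ext p; simp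
    rw [← h1, hdis i, h2, ← Measure.map_apply measurable_snd hB, hπs i]
  have hae : ∀ᵐ x ∂Q, ∀ i, κ i x ↑(S i) = 1 := by
    rw [MeasureTheory.ae_all_iff]
    intro i
    have h0 : ∫⁻ x, κ i x (↑(S i))ᶜ ∂Q = 0 := by
      rw [hkint i _ (S i).measurableSet.compl]
      exact hnull i
    have h1 := (lintegral_eq_zero_iff
      (Kernel.measurable_coe (κ i) (S i).measurableSet.compl)).mp h0
    filter_upwards [h1] with x hx
    haveI : IsProbabilityMeasure (κ i x) := by infer_instance
    exact (prob_compl_eq_zero_iff (S i).measurableSet).mp hx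
  -- the weight function
  set I : (Fin N → Pt d) → ℝ≥0∞ := fun t => ∫⁻ x, ∏ j, κ j x {t j} ∂Q with hI
  have hprodmeas : ∀ t : Fin N → Pt d, Measurable fun x => ∏ j, κ j x {t j} :=
    fun t => Finset.measurable_prod _ fun j _ =>
      Kernel.measurable_coe (κ j) (measurableSet_singleton _)
  have hIle : ∀ t, I t ≤ 1 := by
    intro t
    have : ∀ x, ∏ j, κ j x {t j} ≤ 1 := by
      intro x
      refine Finset.prod_le_one (fun j _ => zero_le) (fun j _ => prob_le_one)
    refine le_trans (lintegral_mono this) ?_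
    simp
  have hIne : ∀ t, I t ≠ ⊤ := fun t => (lt_of_le_of_lt (hIle t) one_lt_top).ne
  set w : (Fin N → Pt d) → ℝ := fun t => if t ∈ T then (I t).toReal else 0 with hw
  -- key marginal identity
  have hkey : ∀ i : Fin N, ∀ s ∈ S i,
      ∑ t ∈ T, (if t i = s then I t else 0) = Pm i {s} := by
    intro i s hs
    have hstep : ∀ t ∈ T, (if t i = s then I t else 0)
        = ∫⁻ x, (if t i = s then ∏ j, κ j x {t j} else 0) ∂Q := by
      intro t _
      by_cases h : t i = s
      · simp only [if_pos h, hI]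
      · simp only [if_neg h]; rw [lintegral_zero]
    rw [Finset.sum_congr rfl hstep, ← lintegral_finset_sum _ (fun t _ => by
      by_cases h : t i = s
      · simpa only [if_pos h] using hprodmeas t
      · simpa only [if_neg h] using measurable_const)]
    have hpt : ∀ x, (∀ j, κ j x ↑(S j) = 1) →
        ∑ t ∈ T, (if t i = s then ∏ j, κ j x {t j} else 0) = κ i x {s} := by
      intro x hx
      set g : Fin N → Pt d → ℝ≥0∞ :=
        fun j y => if j = i then (if y = s then κ j x {y} else 0) else κ j x {y} with hg
      have key2 : ∀ t ∈ T, (if t i = s then ∏ j, κ j x {t j} else 0) = ∏ j, g j (t j) := by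
        intro t _
        by_cases h : t i = s
        · rw [if_pos h]
          refine Finset.prod_congr rfl fun j _ => ?_
          by_cases hj : j = i
          · subst hj; simp [hg, h]
          · simp [hg, hj]
        · rw [if_neg h]
          symm
          apply Finset.prod_eq_zero (Finset.mem_univ i)
          simp [hg, h]
      rw [Finset.sum_congr rfl key2, ← Finset.prod_univ_sum,
        Fintype.prod_eq_mul_prod_compl i]
      have h1 : ∑ y ∈ S i, g i y = κ i x {s} := by
        simp only [hg, if_pos rfl]
        rw [Finset.sum_ite_eq' (S i) s (fun y => κ i x {y}), if_pos hs]
      have h2 : ∀ j ∈ ({i}ᶜ : Finset (Fin N)), (∑ y ∈ S j, g j y) = 1 := by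
        intro j hj
        have hji : j ≠ i := by simpa using hj
        simp only [hg, if_neg hji]
        rw [← meas_finset_sum (κ j x) (S j)]
        exact hx j
      rw [h1, Finset.prod_congr rfl h2]
      simp
    have hcongr : ∫⁻ x, (∑ t ∈ T, if t i = s then ∏ j, κ j x {t j} else 0) ∂Q
        = ∫⁻ x, κ i x {s} ∂Q := by
      apply lintegral_congr_ae
      filter_upwards [hae] with x hx
      exact hpt x hx
    rw [hcongr]
    exact hkint i {s} (measurableSet_singleton s)
  have hfeas : FeasLP S (fun i s => (Pm i {s}).toReal) w := by
    refine ⟨fun t => by simp only [hw]; split <;> simp [ENNReal.toReal_nonneg],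
      fun t ht => by simp only [hw, hT, if_neg ht], fun i s hs => ?_⟩
    have : marg S w i s = ∑ t ∈ T, ((if t i = s then I t else 0)).toReal := by
      rw [marg]
      refine Finset.sum_congr rfl fun t ht => ?_
      by_cases h : t i = s
      · simp [h, hw, ht]
      · simp [h]
    rw [this, ← ENNReal.toReal_sum (fun t _ => by
      by_cases h : t i = s
      · simpa [h] using hIne t
      · simp [h]), hkey i s hs]
  refine ⟨w, hfeas, ?_⟩
  -- objective bound
  haveI : ∀ i, IsMarkovKernel (κ i) := fun i => by rw [hκ]; infer_instance
  have hofw : ∀ t ∈ T, ENNReal.ofReal (w t) = I t := by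
    intro t ht
    rw [hw]
    simp only [if_pos ht]
    exact ENNReal.ofReal_toReal (hIne t)
  have hobj1 : ENNReal.ofReal (objLP S (costW l) w)
      = ∑ t ∈ T, I t * ENNReal.ofReal (costW l t) := by
    rw [objLP, ENNReal.ofReal_sum_of_nonneg (fun t _ => mul_nonneg
      (by simp only [hw]; split <;> simp [ENNReal.toReal_nonneg]) (costW_nonneg l hl t))]
    refine Finset.sum_congr rfl fun t ht => ?_
    rw [ENNReal.ofReal_mul (by simp only [hw]; split <;> simp [ENNReal.toReal_nonneg]),
      hofw t ht]
  rw [hobj1]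
  have hobj2 : ∑ t ∈ T, I t * ENNReal.ofReal (costW l t)
      = ∫⁻ x, ∑ t ∈ T, (∏ j, κ j x {t j}) * ENNReal.ofReal (costW l t) ∂Q := by
    rw [lintegral_finset_sum _ (fun t _ => (hprodmeas t).mul_const _)]
    refine Finset.sum_congr rfl fun t _ => ?_
    rw [hI, lintegral_mul_const _ (hprodmeas t)]
  rw [hobj2]
  have hbound : ∀ x, (∀ j, κ j x ↑(S j) = 1) →
      ∑ t ∈ T, (∏ j, κ j x {t j}) * ENNReal.ofReal (costW l t)
        ≤ ∑ i, ENNReal.ofReal (l i) * ∫⁻ y, ENNReal.ofReal (‖x - y‖ ^ 2) ∂(κ i x) := by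
    intro x hx
    have hstep1 : ∑ t ∈ T, (∏ j, κ j x {t j}) * ENNReal.ofReal (costW l t)
        ≤ ∑ t ∈ T, ∑ i, ENNReal.ofReal (l i) *
            ((∏ j, κ j x {t j}) * ENNReal.ofReal (‖x - t i‖ ^ 2)) := by
      refine Finset.sum_le_sum fun t _ => ?_
      have hc : ENNReal.ofReal (costW l t) ≤ ∑ i, ENNReal.ofReal (l i) *
          ENNReal.ofReal (‖x - t i‖ ^ 2) := by
        refine le_trans (ENNReal.ofReal_le_ofReal (centroid_min l hsum t x)) ?_
        rw [ENNReal.ofReal_sum_of_nonneg (fun i _ => mul_nonneg (hl i).le (sq_nonneg _))]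
        exact le_of_eq (Finset.sum_congr rfl fun i _ => ENNReal.ofReal_mul (hl i).le)
      calc (∏ j, κ j x {t j}) * ENNReal.ofReal (costW l t)
          ≤ (∏ j, κ j x {t j}) * ∑ i, ENNReal.ofReal (l i) *
              ENNReal.ofReal (‖x - t i‖ ^ 2) := mul_le_mul_right hc _
        _ = ∑ i, ENNReal.ofReal (l i) *
              ((∏ j, κ j x {t j}) * ENNReal.ofReal (‖x - t i‖ ^ 2)) := by
            rw [Finset.mul_sum]
            exact Finset.sum_congr rfl fun i _ => by ring
    refine hstep1.trans ?_
    rw [Finset.sum_comm]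
    refine Finset.sum_le_sum fun i _ => ?_
    rw [← Finset.mul_sum]
    refine mul_le_mul_right ?_ _
    -- ∑_{t∈T} ∏_j κ_j{t_j} * ofReal ‖x - t i‖² ≤ ∫⁻ y ...
    set g : Fin N → Pt d → ℝ≥0∞ :=
      fun j y => if j = i then κ j x {y} * ENNReal.ofReal (‖x - y‖ ^ 2) else κ j x {y} with hg
    have key3 : ∀ t ∈ T, (∏ j, κ j x {t j}) * ENNReal.ofReal (‖x - t i‖ ^ 2)
        = ∏ j, g j (t j) := by
      intro t _
      rw [Fintype.prod_eq_mul_prod_compl i, Fintype.prod_eq_mul_prod_compl i (fun j => g j (t j))]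
      have e1 : g i (t i) = κ i x {t i} * ENNReal.ofReal (‖x - t i‖ ^ 2) := by simp [hg]
      have e2 : ∀ j ∈ ({i}ᶜ : Finset (Fin N)), g j (t j) = κ j x {t j} := by
        intro j hj
        have hji : j ≠ i := by simpa using hj
        simp [hg, hji]
      rw [e1, Finset.prod_congr rfl e2]
      ring
    rw [Finset.sum_congr rfl key3, ← Finset.prod_univ_sum, Fintype.prod_eq_mul_prod_compl i]
    have h2 : ∀ j ∈ ({i}ᶜ : Finset (Fin N)), (∑ y ∈ S j, g j y) = 1 := by
      intro j hj
      have hji : j ≠ i := by simpa using hj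
      simp only [hg, if_neg hji]
      rw [← meas_finset_sum (κ j x) (S j)]
      exact hx j
    rw [Finset.prod_congr rfl h2]
    simp only [Finset.prod_const_one, mul_one]
    have h3 : ∑ y ∈ S i, g i y = ∑ y ∈ S i, κ i x {y} * ENNReal.ofReal (‖x - y‖ ^ 2) := by
      refine Finset.sum_congr rfl fun y _ => by simp [hg]
    rw [h3]
    have h4 : ∑ y ∈ S i, κ i x {y} * ENNReal.ofReal (‖x - y‖ ^ 2)
        = ∫⁻ y in ↑(S i), ENNReal.ofReal (‖x - y‖ ^ 2) ∂(κ i x) := by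
      have hU : (↑(S i) : Set (Pt d)) = ⋃ b ∈ S i, {b} := by ext y; simp
      rw [hU, lintegral_biUnion_finset ?_ (fun b _ => measurableSet_singleton b)]
      · refine Finset.sum_congr rfl fun y _ => ?_
        rw [lintegral_singleton]
        ring
      · intro a _ b _ hab
        exact Set.disjoint_singleton.mpr hab
    rw [h4]
    exact setLIntegral_le_lintegral _ _
  have hmono : ∫⁻ x, ∑ t ∈ T, (∏ j, κ j x {t j}) * ENNReal.ofReal (costW l t) ∂Q
      ≤ ∫⁻ x, ∑ i, ENNReal.ofReal (l i) * ∫⁻ y, ENNReal.ofReal (‖x - y‖ ^ 2) ∂(κ i x) ∂Q := by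
    refine lintegral_mono_ae ?_
    filter_upwards [hae] with x hx
    exact hbound x hx
  refine hmono.trans (le_of_eq ?_)
  have hinner_meas : ∀ i : Fin N, Measurable fun x => ∫⁻ y, ENNReal.ofReal (‖x - y‖ ^ 2) ∂(κ i x) := by
    intro i
    have hm : Measurable (Function.uncurry fun x y : Pt d => ENNReal.ofReal (‖x - y‖ ^ 2)) := by
      have he : (Function.uncurry fun x y : Pt d => ENNReal.ofReal (‖x - y‖ ^ 2))
          = fun p : Pt d × Pt d => ENNReal.ofReal (‖p.1 - p.2‖ ^ 2) := rfl
      rw [he]; exact cost_measurable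
    exact Measurable.lintegral_kernel_prod_right hm
  rw [lintegral_finset_sum _ (fun i _ => (hinner_meas i).const_mul _)]
  refine Finset.sum_congr rfl fun i _ => ?_
  rw [lintegral_const_mul _ (hinner_meas i)]
  congr 1
  rw [← hdis i, Measure.lintegral_compProd cost_measurable]
end Lower

/-- there exists a sparse barycenter, with at most
`∑ i, |P i| - N + 1` support points. -/
theorem exists_sparse_barycenter {d N : ℕ}
    (l : Fin N → ℝ) (Pm : Fin N → Measure (Pt d))
    (hl : ∀ i, 0 < l i) (hsum : ∑ i, l i = 1)
    (hprob : ∀ i, IsProbabilityMeasure (Pm i))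
    (hfin : ∀ i, FinitelySupported (Pm i)) :
    ∃ Pbar : Measure (Pt d), IsBarycenter l Pm Pbar ∧ FinitelySupported Pbar ∧
      (msupp Pbar).ncard ≤ (∑ i, (msupp (Pm i)).ncard) - N + 1 := by
  classical
  have hN : 0 < N := by
    rcases Nat.eq_zero_or_pos N with h0 | h
    · subst h0; simp at hsum
    · exact h
  set S : Fin N → Finset (Pt d) := fun i => (hfin i).1.toFinset with hS
  have hScoe : ∀ i, (↑(S i) : Set (Pt d)) = msupp (Pm i) := fun i => (hfin i).1.coe_toFinset
  have hnull : ∀ i, Pm i (↑(S i))ᶜ = 0 := fun i => by rw [hScoe i]; exact (hfin i).2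
  have hb1 : ∀ i, ∑ s ∈ S i, (Pm i {s}).toReal = 1 := by
    intro i
    haveI := hprob i
    rw [← ENNReal.toReal_sum (fun s _ => measure_ne_top _ _), ← meas_finset_sum,
      (prob_compl_eq_zero_iff (S i).measurableSet).mp (hnull i)]
    simp
  have hbnn : ∀ i, ∀ s ∈ S i, 0 ≤ (Pm i {s}).toReal := fun i s _ => ENNReal.toReal_nonneg
  have hSne : ∀ i, (S i).Nonempty := by
    intro i
    by_contra h
    rw [Finset.not_nonempty_iff_eq_empty] at h
    have h2 := hb1 i
    rw [h] at h2
    simp at h2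
  obtain ⟨w, hwF, hwmin, hwcard⟩ := lp_sparse S (fun i s => (Pm i {s}).toReal) (costW l) hN hSne
    (lp_min_exists S _ (costW l) hN hb1 hbnn ⟨_, feas_prod S _ hb1 hbnn⟩)
  obtain ⟨hPbar_prob, hPbar_fsm, hPbar_phi, hPbar_null⟩ :=
    upper_package l hl hN S Pm hprob hnull hb1 w hwF
  refine ⟨PbarM l S w, ⟨hPbar_prob, hPbar_fsm, ?_⟩,
    finitelySupported_of_null_compl _ _ hPbar_null, ?_⟩
  · -- minimality of `phi`
    intro Q hQ hQfsm
    refine le_trans hPbar_phi ?_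
    refine ENNReal.le_of_forall_pos_le_add ?_
    intro ε hε hfin'
    have hQfin : phi l Pm Q ≠ ⊤ := hfin'.ne
    have hWfin : ∀ i, W2sq Q (Pm i) ≠ ⊤ := by
      intro i htop
      apply hQfin
      have hle : ENNReal.ofReal (l i) * W2sq Q (Pm i) ≤ phi l Pm Q :=
        Finset.single_le_sum (f := fun i => ENNReal.ofReal (l i) * W2sq Q (Pm i))
          (fun _ _ => zero_le) (Finset.mem_univ i)
      rw [htop, ENNReal.mul_top (by simp [ENNReal.ofReal_eq_zero, not_le, hl i])] at hle
      exact top_le_iff.mp hle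
    have hchoose : ∀ i : Fin N, ∃ πi : Measure (Pt d × Pt d),
        (πi.map Prod.fst = Q ∧ πi.map Prod.snd = Pm i) ∧
        ∫⁻ p, ENNReal.ofReal (‖p.1 - p.2‖ ^ 2) ∂πi ≤ W2sq Q (Pm i) + ε := by
      intro i
      set c0 := W2sq Q (Pm i) + (ε : ℝ≥0∞) with hc0
      have hlt : W2sq Q (Pm i) < c0 :=
        ENNReal.lt_add_right (hWfin i) (by exact_mod_cast hε.ne')
      rw [W2sq] at hlt
      obtain ⟨πi, hlt2⟩ := iInf_lt_iff.mp hlt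
      obtain ⟨hmem, hval⟩ := iInf_lt_iff.mp hlt2
      exact ⟨πi, ⟨hmem.1, hmem.2⟩, hval.le⟩
    choose π hπspec hπval using hchoose
    obtain ⟨w2, hw2F, hw2obj⟩ := lower_package l hl hsum S Pm hprob hnull Q hQ π
      (fun i => (hπspec i).1) (fun i => (hπspec i).2)
    calc ENNReal.ofReal (objLP S (costW l) w)
        ≤ ENNReal.ofReal (objLP S (costW l) w2) := ENNReal.ofReal_le_ofReal (hwmin w2 hw2F)
      _ ≤ ∑ i, ENNReal.ofReal (l i) * ∫⁻ p, ENNReal.ofReal (‖p.1 - p.2‖ ^ 2) ∂(π i) := hw2obj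
      _ ≤ ∑ i, ENNReal.ofReal (l i) * (W2sq Q (Pm i) + ε) :=
          Finset.sum_le_sum fun i _ => mul_le_mul_right (hπval i) _
      _ = phi l Pm Q + (∑ i, ENNReal.ofReal (l i)) * ε := by
          rw [phi, Finset.sum_mul, ← Finset.sum_add_distrib]
          exact Finset.sum_congr rfl fun i _ => by rw [mul_add]
      _ = phi l Pm Q + ε := by
          rw [← ENNReal.ofReal_sum_of_nonneg (fun i _ => (hl i).le), hsum,
            ENNReal.ofReal_one, one_mul]
  · -- cardinality bound
    have hsub := msupp_subset_of_null_compl _ _ hPbar_null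
    have h1 : (msupp (PbarM l S w)).ncard
        ≤ (((Fintype.piFinset S).filter (fun t => w t ≠ 0)).image (mfun l)).card := by
      have h := Set.ncard_le_ncard hsub (Finset.finite_toSet _)
      rwa [Set.ncard_coe_finset] at h
    have h2 : (((Fintype.piFinset S).filter (fun t => w t ≠ 0)).image (mfun l)).card
        ≤ ((Fintype.piFinset S).filter (fun t => w t ≠ 0)).card := Finset.card_image_le
    have h3 : (∑ i, (msupp (Pm i)).ncard) = ∑ i, (S i).card :=
      Finset.sum_congr rfl fun i _ => by rw [← hScoe i, Set.ncard_coe_finset]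
    rw [h3]
    omega
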